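/- Let N ≥ 1, let f, v : ℝ^N → ℝ be differentiable at a point x with v(x) ≠ 0. Then the function y ↦ f(y)²/v(y) is differentiable at x and ⟨∇(f²/v)(x), ∇v(x)⟩ ≤ ‖∇f(x)‖², where ∇ denotes the gradient and ⟨·,·⟩ the Euclidean inner product. -/

import Mathlib

open RealInnerProductSpace

/-- Pointwise local Picone inequality: if `f, v : ℝ^N → ℝ` are differentiable at `x`
with `v(x) ≠ 0`, then `y ↦ f(y)²/v(y)` is differentiable at `x` and
`⟨∇(f²/v)(x), ∇v(x)⟩ ≤ ‖∇f(x)‖²`. -/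
theorem local_picone_inequality (N : ℕ) (hN : 1 ≤ N)
    (f v : EuclideanSpace ℝ (Fin N) → ℝ) (x : EuclideanSpace ℝ (Fin N))
    (hf : DifferentiableAt ℝ f x) (hv : DifferentiableAt ℝ v x) (hvx : v x ≠ 0) :
    DifferentiableAt ℝ (fun y => f y ^ 2 / v y) x ∧
      ⟪gradient (fun y => f y ^ 2 / v y) x, gradient v x⟫ ≤ ‖gradient f x‖ ^ 2 := by
  set F' := fderiv ℝ f x with hF'
  set V' := fderiv ℝ v x with hV'
  have hinv : HasFDerivAt (Inv.inv ∘ v)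
      ((-ContinuousLinearMap.mulLeftRight ℝ ℝ (v x)⁻¹ (v x)⁻¹).comp V') x :=
    (hasFDerivAt_inv' hvx).comp x hv.hasFDerivAt
  have hmul : HasFDerivAt (fun y => f y * f y) (f x • F' + f x • F') x :=
    hf.hasFDerivAt.mul hf.hasFDerivAt
  have hprod := hmul.mul hinv
  have hfun : (fun y => f y ^ 2 / v y) = fun y => (f y * f y) * (Inv.inv ∘ v) y := by
    funext y; simp [pow_two, div_eq_mul_inv, Function.comp]
  rw [hfun]
  set D := (f x * f x) • (-ContinuousLinearMap.mulLeftRight ℝ ℝ (v x)⁻¹ (v x)⁻¹).comp V'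
      + (Inv.inv ∘ v) x • (f x • F' + f x • F') with hD
  have hdiff : DifferentiableAt ℝ (fun y => (f y * f y) * (Inv.inv ∘ v) y) x :=
    hprod.differentiableAt
  refine ⟨hdiff, ?_⟩
  set a := gradient f x with ha
  set b := gradient v x with hb
  have hgrad : gradient (fun y => (f y * f y) * (Inv.inv ∘ v) y) x
      = (InnerProductSpace.toDual ℝ _).symm D := by
    rw [gradient, (show HasFDerivAt (fun y => f y * f y * (Inv.inv ∘ v) y) D x from hprod).fderiv]
  rw [hgrad, InnerProductSpace.toDual_symm_apply]
  have hFb : F' b = ⟪a, b⟫ := by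
    rw [ha, gradient, InnerProductSpace.toDual_symm_apply]
  have hVb : V' b = ⟪b, b⟫ := by
    rw [hb, gradient, InnerProductSpace.toDual_symm_apply]
  have hDb : D b = (f x * f x) * (-((v x)⁻¹ * V' b * (v x)⁻¹))
      + (v x)⁻¹ * (f x * F' b + f x * F' b) := by
    simp [hD, ContinuousLinearMap.mulLeftRight_apply, Function.comp, mul_comm]
    ring
  rw [hDb, hFb, hVb]
  have key : (0:ℝ) ≤ ‖a - (f x / v x) • b‖ ^ 2 := sq_nonneg _
  have hexp : ‖a - (f x / v x) • b‖ ^ 2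
      = ‖a‖ ^ 2 - 2 * (f x / v x) * ⟪a, b⟫ + (f x / v x) ^ 2 * ⟪b, b⟫ := by
    rw [norm_sub_sq_real, real_inner_smul_right, norm_smul, mul_pow,
      Real.norm_eq_abs, sq_abs, real_inner_self_eq_norm_sq]
    ring
  rw [hexp] at key
  have e1 : f x * f x * -((v x)⁻¹ * ⟪b, b⟫ * (v x)⁻¹) = -((f x / v x) ^ 2 * ⟪b, b⟫) := by
    field_simp
  have e2 : (v x)⁻¹ * (f x * ⟪a, b⟫ + f x * ⟪a, b⟫) = 2 * (f x / v x) * ⟪a, b⟫ := by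
    field_simp; ring
  rw [e1, e2]
  linarith
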